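/- A family 𝒯 of theories is representable by a finite default theory (D,W) (both D and W finite) if and only if 𝒯 is a finite non-including family of finitely generated theories, i.e., each T ∈ 𝒯 satisfies T = Cn(F) for some finite set F of formulas. -/

import Mathlib

/-- Propositional formulas over a set of atoms `α`. -/
inductive PropForm (α : Type) : Type
  | atom : α → PropForm α
  | fls  : PropForm α
  | impl : PropForm α → PropForm α → PropForm α

namespace PropForm

/-- Negation `¬φ`, definable as `φ → ⊥`. -/
def neg {α : Type} (φ : PropForm α) : PropForm α := impl φ fls

/-- Conjunction, definable from implication and falsum. -/
def conj {α : Type} (φ ψ : PropForm α) : PropForm α := (φ.impl ψ.neg).neg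

/-- Biimplication `φ ↔ ψ`. -/
def biimp {α : Type} (φ ψ : PropForm α) : PropForm α := conj (φ.impl ψ) (ψ.impl φ)

/-- Evaluation of a formula under a valuation of the atoms. -/
def eval {α : Type} (v : α → Prop) : PropForm α → Prop
  | atom a   => v a
  | fls      => False
  | impl φ ψ => eval v φ → eval v ψ

/-- Renaming/embedding of atoms. -/
def map {α β : Type} (f : α → β) : PropForm α → PropForm β
  | atom a   => atom (f a)
  | fls      => fls
  | impl φ ψ => impl (map f φ) (map f ψ)

end PropForm

/-- Classical propositional consequence operator. -/
def Cn {α : Type} (S : Set (PropForm α)) : Set (PropForm α) :=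
  {φ | ∀ v : α → Prop, (∀ ψ ∈ S, ψ.eval v) → φ.eval v}

/-- A theory: a set of formulas closed under propositional consequence. -/
def IsTheory {α : Type} (S : Set (PropForm α)) : Prop := Cn S ⊆ S

/-- A set of formulas is consistent if its consequences are not the whole language. -/
def Consistent {α : Type} (S : Set (PropForm α)) : Prop := Cn S ≠ Set.univ

/-- A default `α : Γ / β` with prerequisite, finite set of justifications, consequent. -/
structure Default (α : Type) where
  pre : PropForm α
  jus : Finset (PropForm α)
  con : PropForm α

/-- A default is applicable w.r.t. `S` if no justification's negation follows from `S`. -/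
def Default.Applicable {α : Type} (S : Set (PropForm α)) (d : Default α) : Prop :=
  ∀ γ ∈ d.jus, γ.neg ∉ Cn S

/-- The reduct of `D` w.r.t. `S`: the monotone rules `pre/con` of `S`-applicable defaults. -/
def Reduct {α : Type} (D : Set (Default α)) (S : Set (PropForm α)) :
    Set (PropForm α × PropForm α) :=
  {r | ∃ d ∈ D, d.Applicable S ∧ r = (d.pre, d.con)}

/-- `Cn^B(W)`: consequences of `W` in propositional calculus augmented with rules `B`;
the least set containing `W`, closed under `Cn`, and closed under the rules of `B`. -/
def CnRules {α : Type} (B : Set (PropForm α × PropForm α)) (W : Set (PropForm α)) :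
    Set (PropForm α) :=
  ⋂₀ {S | W ⊆ S ∧ Cn S ⊆ S ∧ ∀ r ∈ B, r.1 ∈ S → r.2 ∈ S}

/-- `S` is an extension of the default theory `(D, W)`. -/
def IsExtension {α : Type} (D : Set (Default α)) (W S : Set (PropForm α)) : Prop :=
  S = CnRules (Reduct D S) W

/-- The family of all extensions of `(D, W)`. -/
def ext {α : Type} (D : Set (Default α)) (W : Set (PropForm α)) : Set (Set (PropForm α)) :=
  {S | IsExtension D W S}

/-- A default is prerequisite-free if its prerequisite is a tautology. -/
def Default.PrereqFree {α : Type} (d : Default α) : Prop :=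
  d.pre ∈ Cn (∅ : Set (PropForm α))

/-- A default is normal if it has the form `α : {β} / β`. -/
def Default.Normal {α : Type} (d : Default α) : Prop := d.jus = {d.con}

section AuxLemmas

variable {α : Type}

lemma subset_Cn (S : Set (PropForm α)) : S ⊆ Cn S := fun φ hφ v hv => hv φ hφ

lemma Cn_mono {S T : Set (PropForm α)} (h : S ⊆ T) : Cn S ⊆ Cn T :=
  fun φ hφ v hv => hφ v (fun ψ hψ => hv ψ (h hψ))

lemma Cn_Cn (S : Set (PropForm α)) : Cn (Cn S) ⊆ Cn S :=
  fun φ hφ v hv => hφ v (fun ψ hψ => hψ v hv)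

lemma Cn_idem (S : Set (PropForm α)) : Cn (Cn S) = Cn S :=
  Set.Subset.antisymm (Cn_Cn S) (Cn_mono (subset_Cn S))

lemma mem_Cn_iff {ψ : PropForm α} {S : Set (PropForm α)} :
    ψ ∈ Cn S ↔ Cn {ψ} ⊆ Cn S := by
  constructor
  · intro h
    have h1 : ({ψ} : Set (PropForm α)) ⊆ Cn S := Set.singleton_subset_iff.mpr h
    exact (Cn_mono h1).trans (Cn_Cn S)
  · intro h
    exact h (subset_Cn _ rfl)

def taut : PropForm α := PropForm.fls.impl PropForm.fls

lemma taut_mem_Cn (S : Set (PropForm α)) : (taut : PropForm α) ∈ Cn S :=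
  fun _ _ h => h

lemma negneg_mem_Cn {φ : PropForm α} {S : Set (PropForm α)} :
    φ.neg.neg ∈ Cn S ↔ φ ∈ Cn S := by
  constructor
  · intro h v hv
    by_contra hc
    exact h v hv hc
  · intro h v hv hc
    exact hc (h v hv)

def conjList : List (PropForm α) → PropForm α
  | [] => taut
  | φ :: L => φ.conj (conjList L)

lemma eval_conj {φ ψ : PropForm α} {v : α → Prop} :
    (φ.conj ψ).eval v ↔ φ.eval v ∧ ψ.eval v := by
  show ((φ.eval v → (ψ.eval v → False)) → False) ↔ _
  tauto

lemma eval_conjList {L : List (PropForm α)} {v : α → Prop} :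
    (conjList L).eval v ↔ ∀ φ ∈ L, φ.eval v := by
  induction L with
  | nil =>
      constructor
      · intro _ φ hφ; exact absurd hφ List.not_mem_nil
      · intro _; exact fun h => h
  | cons φ L ih =>
      rw [show conjList (φ :: L) = φ.conj (conjList L) from rfl, eval_conj, ih]
      simp

lemma Cn_conjList (F : Finset (PropForm α)) :
    Cn {conjList F.toList} = Cn (↑F : Set (PropForm α)) := by
  ext φ
  constructor
  · intro h v hv
    apply h v
    intro ψ hψ
    rw [Set.mem_singleton_iff] at hψ
    subst hψ
    exact eval_conjList.mpr (fun χ hχ => hv χ (Finset.mem_coe.mpr (Finset.mem_toList.mp hχ)))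
  · intro h v hv
    apply h v
    intro ψ hψ
    have h2 := hv _ (Set.mem_singleton _)
    exact eval_conjList.mp h2 ψ (Finset.mem_toList.mpr (Finset.mem_coe.mp hψ))

lemma CnRules_le {B : Set (PropForm α × PropForm α)} {W S : Set (PropForm α)}
    (h1 : W ⊆ S) (h2 : Cn S ⊆ S) (h3 : ∀ r ∈ B, r.1 ∈ S → r.2 ∈ S) :
    CnRules B W ⊆ S :=
  Set.sInter_subset_of_mem ⟨h1, h2, h3⟩

lemma subset_CnRules (B : Set (PropForm α × PropForm α)) (W : Set (PropForm α)) :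
    W ⊆ CnRules B W :=
  fun φ h => Set.mem_sInter.mpr fun _ hS => hS.1 h

lemma Cn_CnRules (B : Set (PropForm α × PropForm α)) (W : Set (PropForm α)) :
    Cn (CnRules B W) ⊆ CnRules B W := by
  intro φ h
  apply Set.mem_sInter.mpr
  intro S hS
  exact hS.2.1 (Cn_mono (Set.sInter_subset_of_mem hS) h)

lemma CnRules_rules (B : Set (PropForm α × PropForm α)) (W : Set (PropForm α)) :
    ∀ r ∈ B, r.1 ∈ CnRules B W → r.2 ∈ CnRules B W := by
  intro r hr h
  apply Set.mem_sInter.mpr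
  intro S hS
  exact hS.2.2 r hr (Set.sInter_subset_of_mem hS h)

lemma CnRules_eq (B : Set (PropForm α × PropForm α)) (W : Set (PropForm α)) :
    CnRules B W = Cn (W ∪ {φ | ∃ r ∈ B, r.1 ∈ CnRules B W ∧ φ = r.2}) := by
  have hCsub : {φ | ∃ r ∈ B, r.1 ∈ CnRules B W ∧ φ = r.2} ⊆ CnRules B W := by
    rintro φ ⟨r, hr, h1, rfl⟩
    exact CnRules_rules B W r hr h1
  have hsub : Cn (W ∪ {φ | ∃ r ∈ B, r.1 ∈ CnRules B W ∧ φ = r.2}) ⊆ CnRules B W :=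
    fun φ h => Cn_CnRules B W (Cn_mono (Set.union_subset (subset_CnRules B W) hCsub) h)
  apply Set.Subset.antisymm _ hsub
  apply CnRules_le
  · exact (Set.subset_union_left).trans (subset_Cn _)
  · exact Cn_Cn _
  · intro r hr h1
    have h2 : r.2 ∈ {φ | ∃ r ∈ B, r.1 ∈ CnRules B W ∧ φ = r.2} := ⟨r, hr, hsub h1, rfl⟩
    exact subset_Cn _ (Set.mem_union_right _ h2)

lemma CnRules_mono {B B' : Set (PropForm α × PropForm α)} (h : B' ⊆ B)
    (W : Set (PropForm α)) : CnRules B' W ⊆ CnRules B W := by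
  intro φ hφ
  apply Set.mem_sInter.mpr
  intro S hS
  refine Set.sInter_subset_of_mem ?_ hφ
  exact ⟨hS.1, hS.2.1, fun r hr => hS.2.2 r (h hr)⟩

lemma CnRules_tautPre {B : Set (PropForm α × PropForm α)} {W : Set (PropForm α)}
    (h : ∀ r ∈ B, r.1 ∈ Cn (∅ : Set (PropForm α))) :
    CnRules B W = Cn (W ∪ Prod.snd '' B) := by
  have hall : ∀ r ∈ B, r.1 ∈ CnRules B W :=
    fun r hr => Cn_CnRules B W (Cn_mono (Set.empty_subset _) (h r hr))
  have hset : {φ | ∃ r ∈ B, r.1 ∈ CnRules B W ∧ φ = r.2} = Prod.snd '' B := by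
    ext φ
    constructor
    · rintro ⟨r, hr, -, rfl⟩
      exact ⟨r, hr, rfl⟩
    · rintro ⟨r, hr, rfl⟩
      exact ⟨r, hr, hall r hr, rfl⟩
  rw [CnRules_eq B W, hset]

end AuxLemmas

/-- representability by a finite default theory. -/
theorem representable_finite_iff {α : Type} [Denumerable α]
    (𝒯 : Set (Set (PropForm α))) :
    (∃ (D : Set (Default α)) (W : Set (PropForm α)), D.Finite ∧ W.Finite ∧ ext D W = 𝒯) ↔
      (𝒯.Finite ∧ (∀ T ∈ 𝒯, IsTheory T) ∧
        (∀ T ∈ 𝒯, ∀ T' ∈ 𝒯, T ⊆ T' → T = T') ∧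
        ∀ T ∈ 𝒯, ∃ F : Finset (PropForm α), T = Cn ↑F) := by
  constructor
  · rintro ⟨D, W, hD, hW, rfl⟩
    have hgen : ∀ S ∈ ext D W, ∃ C : Set (PropForm α),
        C ⊆ (fun d => d.con) '' D ∧ S = Cn (W ∪ C) := by
      intro S hS
      have hS' : S = CnRules (Reduct D S) W := hS
      refine ⟨{φ | ∃ r ∈ Reduct D S, r.1 ∈ CnRules (Reduct D S) W ∧ φ = r.2}, ?_, ?_⟩
      · rintro φ ⟨r, ⟨d, hd, -, rfl⟩, -, rfl⟩
        exact ⟨d, hd, rfl⟩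
      · exact hS'.trans (CnRules_eq _ _)
    refine ⟨?_, ?_, ?_, ?_⟩
    · have hsub : ext D W ⊆ (fun C => Cn (W ∪ C)) '' {C | C ⊆ (fun d => d.con) '' D} := by
        intro S hS
        obtain ⟨C, hC1, hC2⟩ := hgen S hS
        exact ⟨C, hC1, hC2.symm⟩
      exact Set.Finite.subset (Set.Finite.image _ ((hD.image _).finite_subsets)) hsub
    · intro T hT
      have hT' : T = CnRules (Reduct D T) W := hT
      have h2 := Cn_CnRules (Reduct D T) W
      rw [← hT'] at h2
      exact h2
    · intro T hT T' hT' hsub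
      have hTe : T = CnRules (Reduct D T) W := hT
      have hTe' : T' = CnRules (Reduct D T') W := hT'
      have h1 : Reduct D T' ⊆ Reduct D T := by
        rintro r ⟨d, hd, happ, rfl⟩
        refine ⟨d, hd, ?_, rfl⟩
        intro γ hγ hmem
        exact happ γ hγ (Cn_mono hsub hmem)
      have h2 : T' ⊆ T :=
        calc T' = CnRules (Reduct D T') W := hTe'
          _ ⊆ CnRules (Reduct D T) W := CnRules_mono h1 W
          _ = T := hTe.symm
      exact Set.Subset.antisymm hsub h2
    · intro T hT
      obtain ⟨C, hC1, hC2⟩ := hgen T hT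
      have hCfin : (W ∪ C).Finite := hW.union ((hD.image _).subset hC1)
      obtain ⟨F, hF⟩ := hCfin.exists_finset_coe
      exact ⟨F, by rw [hF]; exact hC2⟩
  · rintro ⟨hfin, hth, hanti, hfg⟩
    by_cases hemp : 𝒯 = ∅
    · subst hemp
      refine ⟨{⟨taut, {taut}, PropForm.fls⟩}, ∅, Set.finite_singleton _, Set.finite_empty, ?_⟩
      apply Set.eq_empty_iff_forall_notMem.mpr
      intro S hS
      have hS' : S = CnRules (Reduct {(⟨taut, {taut}, PropForm.fls⟩ : Default α)} S) ∅ := hS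
      by_cases happ : (taut : PropForm α).neg ∈ Cn S
      · have hred : Reduct {(⟨taut, {taut}, PropForm.fls⟩ : Default α)} S = ∅ := by
          apply Set.eq_empty_iff_forall_notMem.mpr
          rintro r ⟨d, hd, hA, rfl⟩
          rw [Set.mem_singleton_iff] at hd
          subst hd
          exact hA taut (Finset.mem_singleton_self _) happ
        rw [hred] at hS'
        have hSe : S = Cn (∅ : Set (PropForm α)) := by
          rw [hS', CnRules_tautPre (by rintro r ⟨⟩)]
          simp
        rw [hSe] at happ
        have h2 : (taut : PropForm α).neg ∈ Cn (∅ : Set (PropForm α)) := Cn_Cn _ happ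
        have h3 := h2 (fun _ => True)
          (by intro ψ h; exact absurd h (Set.notMem_empty ψ))
        exact h3 (fun h => h)
      · apply happ
        have hmem : ((taut : PropForm α), PropForm.fls) ∈
            Reduct {(⟨taut, {taut}, PropForm.fls⟩ : Default α)} S := by
          refine ⟨⟨taut, {taut}, PropForm.fls⟩, rfl, ?_, rfl⟩
          intro γ hγ
          rw [Finset.mem_singleton] at hγ
          subst hγ
          exact happ
        have htin : (taut : PropForm α) ∈
            CnRules (Reduct {(⟨taut, {taut}, PropForm.fls⟩ : Default α)} S) ∅ :=
          Cn_CnRules _ _ (taut_mem_Cn _)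
        have hfls : PropForm.fls ∈ S := by
          rw [hS']
          exact CnRules_rules _ _ _ hmem htin
        intro v hv
        exact fun _ => hv _ hfls
    · obtain ⟨T₀, hT₀⟩ := Set.nonempty_iff_ne_empty.mpr hemp
      have hFx : ∀ T : Set (PropForm α), ∃ G : Finset (PropForm α), T ∈ 𝒯 → T = Cn ↑G := by
        intro T
        by_cases h : T ∈ 𝒯
        · obtain ⟨G, hG⟩ := hfg T h
          exact ⟨G, fun _ => hG⟩
        · exact ⟨∅, fun h' => absurd h' h⟩
      choose F hF using hFx
      set θ : Set (PropForm α) → PropForm α := fun T => conjList (F T).toList with hθdef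
      have hθT : ∀ T ∈ 𝒯, Cn {θ T} = T := by
        intro T hT
        rw [hθdef]
        rw [Cn_conjList, ← hF T hT]
      have hθmem : ∀ T ∈ 𝒯, θ T ∈ T := by
        intro T hT
        have h0 : θ T ∈ Cn {θ T} := subset_Cn _ rfl
        rw [hθT T hT] at h0
        exact h0
      have hCnT : ∀ T ∈ 𝒯, Cn T = T := by
        intro T hT
        rw [hF T hT]
        exact Cn_idem _
      set jus : Set (PropForm α) → Finset (PropForm α) := fun T =>
        ((Set.Finite.diff hfin : (𝒯 \ {T}).Finite).image (fun T' => (θ T').neg)).toFinset with hjusdef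
      have hjusmem : ∀ T γ, γ ∈ jus T ↔ ∃ T' ∈ 𝒯 \ {T}, (θ T').neg = γ := by
        intro T γ
        constructor
        · intro h
          obtain ⟨T', hT', heq⟩ := (Set.Finite.mem_toFinset _).mp h
          exact ⟨T', hT', heq⟩
        · rintro ⟨T', hT', heq⟩
          exact (Set.Finite.mem_toFinset _).mpr ⟨T', hT', heq⟩
      set D : Set (Default α) := (fun T => ⟨taut, jus T, θ T⟩) '' 𝒯 with hDdef
      refine ⟨D, ∅, hfin.image _, Set.finite_empty, ?_⟩
      have happl : ∀ T S : Set (PropForm α),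
          Default.Applicable S ⟨taut, jus T, θ T⟩ ↔
            ∀ T' ∈ 𝒯, T' ≠ T → θ T' ∉ Cn S := by
        intro T S
        constructor
        · intro h T' hT' hne hmem
          exact h ((θ T').neg)
            ((hjusmem T _).mpr ⟨T', ⟨hT', fun hc => hne hc⟩, rfl⟩)
            (negneg_mem_Cn.mpr hmem)
        · intro h γ hγ hmem
          obtain ⟨T', ⟨hT', hne⟩, heq⟩ := (hjusmem T γ).mp hγ
          subst heq
          exact h T' hT' (fun hc => hne hc) (negneg_mem_Cn.mp hmem)
      have hred : ∀ S : Set (PropForm α), Reduct D S =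
          {r | ∃ T ∈ 𝒯, (∀ T' ∈ 𝒯, T' ≠ T → θ T' ∉ Cn S) ∧ r = (taut, θ T)} := by
        intro S
        apply Set.eq_of_subset_of_subset
        · rintro r ⟨d, hd, hA, rfl⟩
          obtain ⟨T, hT, rfl⟩ := hd
          exact ⟨T, hT, (happl T S).mp hA, rfl⟩
        · rintro r ⟨T, hT, hA, rfl⟩
          exact ⟨⟨taut, jus T, θ T⟩, ⟨T, hT, rfl⟩, (happl T S).mpr hA, rfl⟩
      apply Set.ext
      intro S
      constructor
      · intro hS
        have hS' : S = CnRules (Reduct D S) ∅ := hS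
        have htp : ∀ r ∈ Reduct D S, r.1 ∈ Cn (∅ : Set (PropForm α)) := by
          rintro r ⟨d, hd, -, rfl⟩
          obtain ⟨T, hT, rfl⟩ := hd
          exact taut_mem_Cn _
        have h1 := CnRules_tautPre (W := (∅ : Set (PropForm α))) htp
        rw [Set.empty_union] at h1
        have hSeq : S = Cn (Prod.snd '' Reduct D S) := hS'.trans h1
        by_cases hA : ∃ T ∈ 𝒯, ∀ T' ∈ 𝒯, T' ≠ T → θ T' ∉ Cn S
        · obtain ⟨T, hT, hTapp⟩ := hA
          have himg : Prod.snd '' Reduct D S = {θ T} := by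
            apply Set.eq_of_subset_of_subset
            · rintro φ ⟨r, hr, rfl⟩
              have hr2 := hr
              rw [hred S] at hr2
              obtain ⟨T'', hT'', happ'', heq⟩ := hr2
              by_cases he : T'' = T
              · subst he
                rw [heq]
                rfl
              · exfalso
                apply hTapp T'' hT'' he
                apply subset_Cn
                rw [hSeq]
                apply subset_Cn
                exact ⟨r, hr, by rw [heq]⟩
            · intro φ hφ
              rw [Set.mem_singleton_iff] at hφ
              subst hφ
              refine ⟨((taut : PropForm α), θ T), ?_, rfl⟩
              rw [hred S]
              exact ⟨T, hT, hTapp, rfl⟩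
          rw [himg] at hSeq
          rw [hSeq, hθT T hT]
          exact hT
        · exfalso
          push_neg at hA
          have hRe : Reduct D S = ∅ := by
            rw [hred S]
            apply Set.eq_empty_iff_forall_notMem.mpr
            rintro r ⟨T, hT, happ', -⟩
            obtain ⟨T', hT', hne, hmem⟩ := hA T hT
            exact happ' T' hT' hne hmem
          rw [hRe, Set.image_empty] at hSeq
          obtain ⟨T', hT', hne, hmem⟩ := hA T₀ hT₀
          rw [hSeq] at hmem
          have h3 : θ T' ∈ Cn (∅ : Set (PropForm α)) := Cn_Cn _ hmem
          have h4 : T' ⊆ Cn (∅ : Set (PropForm α)) := by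
            rw [← hθT T' hT']
            exact mem_Cn_iff.mp h3
          have h5 : Cn (∅ : Set (PropForm α)) ⊆ T₀ := by
            rw [hF T₀ hT₀]
            exact Cn_mono (Set.empty_subset _)
          exact hne (hanti T' hT' T₀ hT₀ (h4.trans h5))
      · intro hT
        show S = CnRules (Reduct D S) ∅
        have hCnS : Cn S = S := hCnT S hT
        have hre : Reduct D S = {(((taut : PropForm α)), θ S)} := by
          rw [hred S]
          apply Set.eq_of_subset_of_subset
          · rintro r ⟨T', hT', happ', rfl⟩
            have hTS : T' = S := by
              by_contra hne
              exact happ' S hT (fun h => hne h.symm) (subset_Cn _ (hθmem S hT))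
            subst hTS
            rfl
          · intro r hr
            rw [Set.mem_singleton_iff] at hr
            subst hr
            refine ⟨S, hT, ?_, rfl⟩
            intro T'' hT'' hne hmem
            have hsub : T'' ⊆ Cn S := by
              rw [← hθT T'' hT'']
              exact mem_Cn_iff.mp hmem
            rw [hCnS] at hsub
            exact hne (hanti T'' hT'' S hT hsub)
        rw [hre]
        have h1 := CnRules_tautPre (W := (∅ : Set (PropForm α)))
          (B := {(((taut : PropForm α)), θ S)})
          (by rintro r hr; rw [Set.mem_singleton_iff] at hr; subst hr; exact taut_mem_Cn _)
        rw [h1, Set.empty_union, Set.image_singleton]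
        exact (hθT S hT).symm
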